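/- Let 𝕂 be a field, F a 𝕂-vector space, U ⊆ 𝕂 a set, f : U → F, and n ∈ ℕ. Then for all 2n points y₁,…,y_n, x₁,…,x_n ∈ U which are pairwise distinct, the divided differences satisfy f^{>n-1<}(y₁,…,y_n) − f^{>n-1<}(x₁,…,x_n) = Σ_{j=1}^n (y_j − x_j) • f^{>n<}(x₁,…,x_j, y_j, …, y_n). -/

import Mathlib

/-- The `n`-th divided difference of `f`, defined recursively on `(n+1)`-tuples by
`f^{>0<}(x₁) = f(x₁)` and
`f^{>n<}(x₁,…,x_{n+1}) = (f^{>n-1<}(x₁,x₃,…,x_{n+1}) − f^{>n-1<}(x₂,x₃,…,x_{n+1}))/(x₁−x₂)`. -/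
noncomputable def divDiff {𝕂 F : Type*} [Field 𝕂] [AddCommGroup F] [Module 𝕂 F]
    (f : 𝕂 → F) : (n : ℕ) → (Fin (n + 1) → 𝕂) → F
  | 0, t => f (t 0)
  | n + 1, t => (t 0 - t 1)⁻¹ •
      (divDiff f n (fun i => if i = 0 then t 0 else t i.succ) -
       divDiff f n (fun i => if i = 0 then t 1 else t i.succ))

section Aux
open Finset
variable {𝕂 F : Type*} [Field 𝕂] [AddCommGroup F] [Module 𝕂 F]

lemma divDiff_succ (f : 𝕂 → F) {n : ℕ} (t : Fin (n + 2) → 𝕂) :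
    divDiff f (n + 1) t = (t 0 - t 1)⁻¹ •
      (divDiff f n (t ∘ (1 : Fin (n + 2)).succAbove) -
       divDiff f n (t ∘ (0 : Fin (n + 2)).succAbove)) := by
  have h1 : (fun i : Fin (n + 1) => if i = 0 then t 0 else t i.succ)
      = t ∘ (1 : Fin (n + 2)).succAbove := by
    funext i
    rcases eq_or_ne i 0 with rfl | h
    · have h01 : (1 : Fin (n + 2)).succAbove 0 = 0 := by
        rw [Fin.succAbove_of_castSucc_lt]
        · rfl
        · rw [Fin.lt_iff_val_lt_val]
          simp
      simp [Function.comp, h01]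
    · have hs : (1 : Fin (n + 2)).succAbove i = i.succ := by
        rw [Fin.succAbove_of_le_castSucc]
        rw [Fin.le_iff_val_le_val, Fin.val_one, Fin.coe_castSucc]
        exact Fin.pos_iff_ne_zero.mpr h
      simp [Function.comp, hs, h]
  have h0 : (fun i : Fin (n + 1) => if i = 0 then t 1 else t i.succ)
      = t ∘ (0 : Fin (n + 2)).succAbove := by
    funext i
    rcases eq_or_ne i 0 with rfl | h
    · simp [Function.comp, Fin.succAbove_zero, Fin.succ_zero_eq_one]
    · simp [Function.comp, Fin.succAbove_zero, h]
  rw [divDiff, h1, h0]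

lemma image_succAbove_univ {n : ℕ} (p : Fin (n + 1)) :
    (univ : Finset (Fin n)).image p.succAbove = univ.erase p := by
  apply Finset.eq_of_subset_of_card_le
  · intro k hk
    simp only [mem_image, mem_univ, true_and] at hk
    obtain ⟨i, rfl⟩ := hk
    simp [Fin.succAbove_ne]
  · rw [card_erase_of_mem (mem_univ p), card_image_of_injective _ (Fin.succAbove_right_injective)]
    simp

lemma prod_erase_succAbove {n : ℕ} (t : Fin (n + 2) → 𝕂) (p : Fin (n + 2)) (i : Fin (n + 1)) :
    ∏ j ∈ univ.erase (p.succAbove i), (t (p.succAbove i) - t j)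
      = (t (p.succAbove i) - t p) *
        ∏ j ∈ univ.erase i, (t (p.succAbove i) - t (p.succAbove j)) := by
  have hinj : Function.Injective p.succAbove := Fin.succAbove_right_injective
  have himg : (univ.erase i).image p.succAbove = (univ.erase (p.succAbove i)).erase p := by
    rw [Finset.image_erase hinj, image_succAbove_univ, Finset.erase_right_comm]
  have h2 : (∏ j ∈ univ.erase i, (t (p.succAbove i) - t (p.succAbove j)))
      = ∏ k ∈ (univ.erase i).image p.succAbove, (t (p.succAbove i) - t k) :=
    (Finset.prod_image (f := fun k => t (p.succAbove i) - t k) (fun a _ b _ h => hinj h)).symm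
  rw [h2, himg, Finset.mul_prod_erase (univ.erase (p.succAbove i))
    (fun k => t (p.succAbove i) - t k)
    (Finset.mem_erase.mpr ⟨(Fin.succAbove_ne p i).symm, mem_univ p⟩)]

noncomputable def ddw {n : ℕ} (t : Fin n → 𝕂) (i : Fin n) : 𝕂 :=
  (∏ j ∈ univ.erase i, (t i - t j))⁻¹

lemma ddw_succAbove {n : ℕ} (t : Fin (n + 2) → 𝕂) (ht : Function.Injective t)
    (p : Fin (n + 2)) (i : Fin (n + 1)) :
    ddw (t ∘ p.succAbove) i = ddw t (p.succAbove i) * (t (p.succAbove i) - t p) := by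
  have hne : t (p.succAbove i) - t p ≠ 0 :=
    sub_ne_zero.mpr (fun h => Fin.succAbove_ne p i (ht h))
  unfold ddw
  rw [prod_erase_succAbove t p i, mul_inv, Function.comp]
  rw [mul_comm ((t (p.succAbove i) - t p))⁻¹, mul_assoc, inv_mul_cancel₀ hne, mul_one]
  rfl

lemma sum_side {n : ℕ} (f : 𝕂 → F) (t : Fin (n + 2) → 𝕂) (ht : Function.Injective t)
    (p : Fin (n + 2)) :
    (∑ i, ddw (t ∘ p.succAbove) i • f (t (p.succAbove i)))
      = ∑ k, (ddw t k * (t k - t p)) • f (t k) := by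
  have h0 : ∑ k, (ddw t k * (t k - t p)) • f (t k)
      = (ddw t p * (t p - t p)) • f (t p)
        + ∑ i, (ddw t (p.succAbove i) * (t (p.succAbove i) - t p)) • f (t (p.succAbove i)) :=
    Fin.sum_univ_succAbove _ p
  rw [h0, sub_self, mul_zero, zero_smul, zero_add]
  exact Finset.sum_congr rfl fun i _ => by rw [ddw_succAbove t ht p i]

lemma key {n : ℕ} (f : 𝕂 → F) (t : Fin (n + 2) → 𝕂) (ht : Function.Injective t)
    (a b : Fin (n + 2)) (hab : a ≠ b) :
    (t a - t b)⁻¹ •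
      ((∑ i, ddw (t ∘ b.succAbove) i • f (t (b.succAbove i))) -
       (∑ i, ddw (t ∘ a.succAbove) i • f (t (a.succAbove i)))) =
    ∑ k, ddw t k • f (t k) := by
  have hne : t a - t b ≠ 0 := sub_ne_zero.mpr (fun h => hab (ht h))
  rw [sum_side f t ht b, sum_side f t ht a, ← Finset.sum_sub_distrib]
  have h1 : ∀ k : Fin (n + 2),
      (ddw t k * (t k - t b)) • f (t k) - (ddw t k * (t k - t a)) • f (t k)
        = ((t a - t b) * ddw t k) • f (t k) := by
    intro k
    rw [← sub_smul]
    ring_nf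
  rw [Finset.sum_congr rfl fun k _ => h1 k, Finset.smul_sum]
  refine Finset.sum_congr rfl fun k _ => ?_
  rw [smul_smul, ← mul_assoc, inv_mul_cancel₀ hne, one_mul]

lemma newton (f : 𝕂 → F) : ∀ (n : ℕ) (t : Fin (n + 1) → 𝕂), Function.Injective t →
    divDiff f n t = ∑ i, ddw t i • f (t i)
  | 0, t, _ => by
    have he : (univ : Finset (Fin 1)).erase 0 = ∅ := by decide
    simp [divDiff, ddw, he]
  | n + 1, t, ht => by
    have hab : (0 : Fin (n + 2)) ≠ 1 := Fin.ne_of_val_ne (by simp)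
    rw [divDiff_succ,
      newton f n _ (ht.comp Fin.succAbove_right_injective),
      newton f n _ (ht.comp Fin.succAbove_right_injective)]
    exact key f t ht 0 1 hab

lemma pivot {n : ℕ} (f : 𝕂 → F) (t : Fin (n + 2) → 𝕂) (ht : Function.Injective t)
    (a b : Fin (n + 2)) (hab : a ≠ b) :
    divDiff f (n + 1) t = (t a - t b)⁻¹ •
      (divDiff f n (t ∘ b.succAbove) - divDiff f n (t ∘ a.succAbove)) := by
  rw [newton f (n + 1) t ht,
    newton f n _ (ht.comp Fin.succAbove_right_injective),
    newton f n _ (ht.comp Fin.succAbove_right_injective),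
    ← key f t ht a b hab]
  rfl

lemma succAbove_val {m : ℕ} (v : ℕ) (hv : v < m + 2) (k : Fin (m + 1)) :
    (((⟨v, hv⟩ : Fin (m + 2)).succAbove k : Fin (m + 2)) : ℕ)
      = if (k : ℕ) < v then (k : ℕ) else (k : ℕ) + 1 := by
  rcases lt_or_ge (k : ℕ) v with h | h
  · rw [Fin.succAbove_of_castSucc_lt _ _ (by rw [Fin.lt_iff_val_lt_val]; exact h), if_pos h]
    rfl
  · rw [Fin.succAbove_of_le_castSucc _ _ (by rw [Fin.le_iff_val_le_val]; exact h),
      if_neg (not_lt.mpr h)]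
    rfl

end Aux

/-- Telescoping identity for divided differences (Lemma 6.6(b) of Bertram–Glöckner–Neeb):
for `2n` pairwise distinct points `y₁,…,y_n, x₁,…,x_n` (here `n = m+1`, `0`-indexed),
`f^{>n-1<}(y₁,…,y_n) − f^{>n-1<}(x₁,…,x_n)
  = Σ_{j=1}^n (y_j − x_j) • f^{>n<}(x₁,…,x_j, y_j,…,y_n)`. -/
theorem stmt_9 (𝕂 F : Type*) [Field 𝕂] [AddCommGroup F] [Module 𝕂 F]
    (U : Set 𝕂) (f : 𝕂 → F) (m : ℕ) (x y : ℕ → 𝕂)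
    (hxU : ∀ i ≤ m, x i ∈ U) (hyU : ∀ i ≤ m, y i ∈ U)
    (hdist : ∀ i ≤ m, ∀ j ≤ m,
      (i ≠ j → x i ≠ x j) ∧ (i ≠ j → y i ≠ y j) ∧ x i ≠ y j) :
    divDiff f m (fun i => y i) - divDiff f m (fun i => x i)
      = ∑ j : Fin (m + 1), (y j - x j) •
          divDiff f (m + 1)
            (fun k : Fin (m + 2) => if (k : ℕ) ≤ (j : ℕ) then x k else y (k - 1)) := by
  set z : ℕ → Fin (m + 1) → 𝕂 := fun j k => if (k : ℕ) < j then x k else y k with hz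
  set g : ℕ → F := fun j => divDiff f m (z j) with hg
  have hy0 : (fun i : Fin (m + 1) => y (i : ℕ)) = z 0 := by
    funext k; simp [hz]
  have hxm : (fun i : Fin (m + 1) => x (i : ℕ)) = z (m + 1) := by
    funext k; simp [hz, k.isLt, Nat.lt_succ_of_lt]
  have hsummand : ∀ j : Fin (m + 1),
      (y j - x j) • divDiff f (m + 1)
          (fun k : Fin (m + 2) => if (k : ℕ) ≤ (j : ℕ) then x k else y ((k : ℕ) - 1))
        = g j - g ((j : ℕ) + 1) := by
    intro j
    have hjm : (j : ℕ) ≤ m := Nat.lt_succ_iff.mp j.isLt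
    set t : Fin (m + 2) → 𝕂 :=
      fun k => if (k : ℕ) ≤ (j : ℕ) then x k else y ((k : ℕ) - 1) with htdef
    have ha : (j : ℕ) < m + 2 := by omega
    have hb : (j : ℕ) + 1 < m + 2 := by omega
    set a : Fin (m + 2) := ⟨(j : ℕ), ha⟩ with hadef
    set b : Fin (m + 2) := ⟨(j : ℕ) + 1, hb⟩ with hbdef
    have ht : Function.Injective t := by
      intro k1 k2 heq
      refine Fin.ext ?_
      by_contra hne
      have hk1 : (k1 : ℕ) < m + 2 := k1.isLt
      have hk2 : (k2 : ℕ) < m + 2 := k2.isLt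
      simp only [htdef] at heq
      split_ifs at heq with h1 h2 h2
      · exact (hdist k1 (by omega) k2 (by omega)).1 hne heq
      · exact (hdist k1 (by omega) ((k2 : ℕ) - 1) (by omega)).2.2 heq
      · exact (hdist k2 (by omega) ((k1 : ℕ) - 1) (by omega)).2.2 heq.symm
      · exact (hdist ((k1 : ℕ) - 1) (by omega) ((k2 : ℕ) - 1) (by omega)).2.1
          (by omega) heq
    have hcompb : t ∘ b.succAbove = z ((j : ℕ) + 1) := by
      funext k
      have hv : ((b.succAbove k : Fin (m + 2)) : ℕ) = if (k : ℕ) < (j : ℕ) + 1 then (k : ℕ) else (k : ℕ) + 1 :=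
        succAbove_val ((j : ℕ) + 1) hb k
      simp only [Function.comp, htdef, hz, hv]
      split_ifs <;> first | rfl | (exfalso; omega) | (congr 1; omega)
    have hcompa : t ∘ a.succAbove = z (j : ℕ) := by
      funext k
      have hv : ((a.succAbove k : Fin (m + 2)) : ℕ) = if (k : ℕ) < (j : ℕ) then (k : ℕ) else (k : ℕ) + 1 :=
        succAbove_val (j : ℕ) ha k
      simp only [Function.comp, htdef, hz, hv]
      split_ifs <;> first | rfl | (exfalso; omega) | (congr 1; omega)
    have hta : t a = x j := by simp [htdef, hadef]
    have htb : t b = y j := by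
      simp only [htdef, hbdef]
      rw [if_neg (by simp)]
      simp
    have hxy : x (j : ℕ) ≠ y (j : ℕ) := (hdist j hjm j hjm).2.2
    rw [pivot f t ht a b (by simp [hadef, hbdef, Fin.ext_iff]),
      hcompa, hcompb, hta, htb, smul_smul]
    have hc : x (j : ℕ) - y (j : ℕ) ≠ 0 := sub_ne_zero.mpr hxy
    have : (y (j : ℕ) - x (j : ℕ)) * (x (j : ℕ) - y (j : ℕ))⁻¹ = -1 := by
      rw [← neg_sub (x (j : ℕ)), neg_mul, mul_inv_cancel₀ hc]
    rw [this, neg_one_smul, neg_sub]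
  rw [hy0, hxm, Finset.sum_congr rfl fun j _ => hsummand j]
  have := Fin.sum_univ_eq_sum_range (fun i => g i - g (i + 1)) (m + 1)
  rw [this, Finset.sum_range_sub' g]
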